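/- For all real numbers A ≤ B, every t ∈ ℝ, and every real c ≥ 0, there exist constants C > 0, N ∈ ℕ, and T > 0 such that for all s ∈ ℂ with A ≤ Re(s) ≤ B and |Im(s)| ≥ T one has |Γ((1 − s − it + c)/2)| ≤ C · (1 + |s|)^N · |Γ((s + it + c)/2)|, where Γ is the complex Gamma function and i = √−1. (This is the key estimate in the proof of Lemma 3.1 (lem:gamma:poly): the quotient Γ((1−s−it+c)/2)/Γ((s+it+c)/2) is bounded by a polynomial in s on vertical strips, for Im(s) sufficiently large.) -/

import Mathlib

open Complex

open Real

set_option maxHeartbeats 1000000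

noncomputable def Bn (x₀ w₁ : ℝ) : ℝ :=
  ∫ x : ℝ in (0:ℝ)..1, ‖(x : ℂ) ^ ((x₀:ℂ) - 1) * (1 - (x : ℂ)) ^ ((w₁:ℂ) - 1)‖

lemma norm_beta_integrand {x : ℝ} (hx0 : 0 < x) (hx1 : x < 1) (u v : ℂ) :
    ‖(x : ℂ) ^ (u - 1) * (1 - (x : ℂ)) ^ (v - 1)‖
      = x ^ (u.re - 1) * (1 - x) ^ (v.re - 1) := by
  have h1x : (0:ℝ) < 1 - x := by linarith
  rw [norm_mul, show (1 - (x:ℂ)) = ((1 - x : ℝ) : ℂ) by push_cast; ring,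
    Complex.norm_cpow_eq_rpow_re_of_pos hx0, Complex.norm_cpow_eq_rpow_re_of_pos h1x]
  simp

lemma Bn_nonneg (x₀ w₁ : ℝ) : 0 ≤ Bn x₀ w₁ :=
  intervalIntegral.integral_nonneg zero_le_one (fun _ _ => norm_nonneg _)

lemma beta_norm_le {u : ℂ} {w x₀ w₁ : ℝ} (hx₀ : 0 < x₀) (hw₁ : 0 < w₁)
    (hu : x₀ ≤ u.re) (hw : w₁ ≤ w) :
    ‖Complex.betaIntegral u (w : ℂ)‖ ≤ Bn x₀ w₁ := by
  have hInt : IntervalIntegrable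
      (fun x : ℝ => ‖(x : ℂ) ^ ((x₀:ℂ) - 1) * (1 - (x : ℂ)) ^ ((w₁:ℂ) - 1)‖)
      MeasureTheory.volume 0 1 :=
    (Complex.betaIntegral_convergent (by simpa using hx₀) (by simpa using hw₁)).norm
  have key : ‖Complex.betaIntegral u (w : ℂ)‖ ≤ |Bn x₀ w₁| := by
    rw [Complex.betaIntegral]
    refine intervalIntegral.norm_integral_le_abs_of_norm_le ?_ hInt
    have h1 : ∀ᵐ (x : ℝ), x ≠ 1 := by
      rw [MeasureTheory.ae_iff]
      have : {x : ℝ | ¬ x ≠ 1} = {1} := by ext x; simp [not_not]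
      rw [this]
      exact Real.volume_singleton
    filter_upwards [MeasureTheory.ae_restrict_of_ae h1,
      MeasureTheory.ae_restrict_mem measurableSet_uIoc] with x hx1 hxm
    rw [Set.uIoc_of_le zero_le_one] at hxm
    have hx0 : 0 < x := hxm.1
    have hxlt : x < 1 := lt_of_le_of_ne hxm.2 hx1
    rw [norm_beta_integrand hx0 hxlt, norm_beta_integrand hx0 hxlt]
    simp only [Complex.ofReal_re]
    have h1x : (0:ℝ) < 1 - x := by linarith
    refine mul_le_mul ?_ ?_ (Real.rpow_nonneg h1x.le _) (Real.rpow_nonneg hx0.le _)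
    · exact Real.rpow_le_rpow_of_exponent_ge hx0 hxlt.le (by linarith)
    · exact Real.rpow_le_rpow_of_exponent_ge h1x (by linarith) (by linarith)
  exact key.trans_eq (abs_of_nonneg (Bn_nonneg _ _))

lemma Bn_pos {x₀ w₁ : ℝ} (hx₀ : 0 < x₀) (hw₁ : 0 < w₁) : 0 < Bn x₀ w₁ := by
  have h := Complex.Gamma_mul_Gamma_eq_betaIntegral
    (s := (x₀:ℂ)) (t := (w₁:ℂ)) (by simpa using hx₀) (by simpa using hw₁)
  have hne : Complex.betaIntegral (x₀:ℂ) (w₁:ℂ) ≠ 0 := by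
    intro h0
    rw [h0, mul_zero] at h
    have h1 : Complex.Gamma (x₀:ℂ) ≠ 0 := by
      rw [Complex.Gamma_ofReal]
      exact_mod_cast Real.Gamma_ne_zero (fun m => by nlinarith [Nat.cast_nonneg (α := ℝ) m])
    have h2 : Complex.Gamma (w₁:ℂ) ≠ 0 := by
      rw [Complex.Gamma_ofReal]
      exact_mod_cast Real.Gamma_ne_zero (fun m => by nlinarith [Nat.cast_nonneg (α := ℝ) m])
    exact mul_ne_zero h1 h2 h
  have hle : ‖Complex.betaIntegral (x₀:ℂ) (w₁:ℂ)‖ ≤ Bn x₀ w₁ :=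
    beta_norm_le hx₀ hw₁ (by simp) le_rfl
  exact lt_of_lt_of_le (norm_pos_iff.mpr hne) hle

/-- Gamma shift by a positive real amount. -/
lemma gamma_shift {u : ℂ} {w x₀ w₁ : ℝ} (hx₀ : 0 < x₀) (hw₁ : 0 < w₁)
    (hu : x₀ ≤ u.re) (hw : w₁ ≤ w) :
    ‖Complex.Gamma u‖ * Real.Gamma w ≤ Bn x₀ w₁ * ‖Complex.Gamma (u + w)‖ := by
  have h := Complex.Gamma_mul_Gamma_eq_betaIntegral
    (s := u) (t := (w:ℂ)) (lt_of_lt_of_le hx₀ hu) (by simpa using hw₁.trans_le hw)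
  have := congrArg norm h
  rw [norm_mul, norm_mul, Complex.Gamma_ofReal] at this
  have hGw : ‖(Real.Gamma w : ℂ)‖ = Real.Gamma w := by
    rw [Complex.norm_real, Real.norm_eq_abs, _root_.abs_of_nonneg (Real.Gamma_nonneg_of_nonneg (hw₁.le.trans hw))]
  rw [hGw] at this
  calc ‖Complex.Gamma u‖ * Real.Gamma w
      = ‖Complex.Gamma (u + w)‖ * ‖Complex.betaIntegral u (w:ℂ)‖ := this
    _ ≤ ‖Complex.Gamma (u + w)‖ * Bn x₀ w₁ :=
        mul_le_mul_of_nonneg_left (beta_norm_le hx₀ hw₁ hu hw) (norm_nonneg _)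
    _ = Bn x₀ w₁ * ‖Complex.Gamma (u + w)‖ := mul_comm _ _

/-- Shifting up by a natural number only increases `‖Γ‖`, provided `1 ≤ |Im|`. -/
lemma gamma_nat_up (u : ℂ) (him : 1 ≤ |u.im|) (k : ℕ) :
    ‖Complex.Gamma u‖ ≤ ‖Complex.Gamma (u + k)‖ := by
  induction k with
  | zero => simp
  | succ k ih =>
    have hne : u + k ≠ 0 := by
      intro h
      have : (u + k).im = 0 := by rw [h]; simp
      simp at this
      rw [this] at him; norm_num at him
    have hrec : Complex.Gamma (u + (k+1:ℕ)) = (u + k) * Complex.Gamma (u + k) := by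
      rw [show (u + (k+1:ℕ) : ℂ) = (u + k) + 1 by push_cast; ring]
      exact Complex.Gamma_add_one _ hne
    have h1 : (1:ℝ) ≤ ‖u + (k:ℂ)‖ := by
      calc (1:ℝ) ≤ |u.im| := him
        _ = |(u + (k:ℂ)).im| := by simp
        _ ≤ ‖u + (k:ℂ)‖ := Complex.abs_im_le_norm _
    calc ‖Complex.Gamma u‖ ≤ ‖Complex.Gamma (u + k)‖ := ih
      _ = 1 * ‖Complex.Gamma (u + k)‖ := (one_mul _).symm
      _ ≤ ‖u + k‖ * ‖Complex.Gamma (u + k)‖ :=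
          mul_le_mul_of_nonneg_right h1 (norm_nonneg _)
      _ = ‖Complex.Gamma (u + (k+1:ℕ))‖ := by rw [hrec, norm_mul]

/-- Shifting down by a natural number costs a polynomial factor. -/
lemma gamma_nat_down (v : ℂ) (hv : v.im ≠ 0) (k : ℕ) :
    ‖Complex.Gamma (v + k)‖ ≤ (‖v‖ + k) ^ k * ‖Complex.Gamma v‖ := by
  induction k with
  | zero => simp
  | succ k ih =>
    have hne : v + k ≠ 0 := by
      intro h
      have : (v + k).im = 0 := by rw [h]; simp
      simp at this; exact hv this
    have hrec : Complex.Gamma (v + (k+1:ℕ)) = (v + k) * Complex.Gamma (v + k) := by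
      rw [show (v + (k+1:ℕ) : ℂ) = (v + k) + 1 by push_cast; ring]
      exact Complex.Gamma_add_one _ hne
    have hb : ‖v + (k:ℂ)‖ ≤ ‖v‖ + k := by
      calc ‖v + (k:ℂ)‖ ≤ ‖v‖ + ‖(k:ℂ)‖ := norm_add_le _ _
        _ = ‖v‖ + k := by simp
    calc ‖Complex.Gamma (v + (k+1:ℕ))‖ = ‖v + k‖ * ‖Complex.Gamma (v + k)‖ := by
          rw [hrec, norm_mul]
      _ ≤ (‖v‖ + k) * ((‖v‖ + k) ^ k * ‖Complex.Gamma v‖) :=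
          mul_le_mul hb ih (norm_nonneg _) (by positivity)
      _ = (‖v‖ + k) ^ (k+1) * ‖Complex.Gamma v‖ := by ring
      _ ≤ (‖v‖ + (k+1:ℕ)) ^ (k+1) * ‖Complex.Gamma v‖ := by
          refine mul_le_mul_of_nonneg_right (pow_le_pow_left₀ (by positivity) ?_ _) (norm_nonneg _)
          push_cast; linarith

/-- `Real.Gamma w ≥ 1/2` for `w ≥ 1`. -/
lemma real_gamma_ge_half {w : ℝ} (hw : 1 ≤ w) : (1/2 : ℝ) ≤ Real.Gamma w := by
  have key : ∀ v : ℝ, 2 ≤ v → (1:ℝ) ≤ Real.Gamma v := by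
    intro v hv
    rcases eq_or_lt_of_le hv with h | h
    · rw [← h, Real.Gamma_two]
    · have := Real.Gamma_strictMonoOn_Ici (Set.self_mem_Ici) (Set.mem_Ici.mpr hv) h
      rw [Real.Gamma_two] at this
      exact this.le
  rcases le_or_gt 2 w with h | h
  · linarith [key w h]
  · have h1 : Real.Gamma (w + 1) = w * Real.Gamma w :=
      Real.Gamma_add_one (by linarith)
    have h2 : (1:ℝ) ≤ w * Real.Gamma w := h1 ▸ key (w+1) (by linarith)
    nlinarith [Real.Gamma_pos_of_pos (show (0:ℝ) < w by linarith)]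

/-- Upper bound for `‖sin v‖`. -/
lemma norm_sin_le (v : ℂ) : ‖Complex.sin v‖ ≤ Real.exp |v.im| := by
  have : Complex.sin v = (Complex.exp (-v * I) - Complex.exp (v * I)) * I / 2 := rfl
  rw [this]
  rw [norm_div, norm_mul, Complex.norm_I, mul_one]
  have h1 : ‖Complex.exp (-v * I)‖ = Real.exp v.im := by
    rw [Complex.norm_exp]; congr 1; simp
  have h2 : ‖Complex.exp (v * I)‖ = Real.exp (-v.im) := by
    rw [Complex.norm_exp]; congr 1; simp
  have h3 : ‖Complex.exp (-v * I) - Complex.exp (v * I)‖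
      ≤ Real.exp v.im + Real.exp (-v.im) := by
    calc _ ≤ ‖Complex.exp (-v * I)‖ + ‖Complex.exp (v * I)‖ := norm_sub_le _ _
      _ = _ := by rw [h1, h2]
  have h4 : Real.exp v.im ≤ Real.exp |v.im| := Real.exp_le_exp.mpr (le_abs_self _)
  have h5 : Real.exp (-v.im) ≤ Real.exp |v.im| := Real.exp_le_exp.mpr (neg_le_abs _)
  have : ‖(2:ℂ)‖ = 2 := by norm_num
  rw [this]
  nlinarith [Real.exp_pos |v.im|]

/-- Lower bound for `‖sin v‖` when `1 ≤ |Im v|`. -/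
lemma norm_sin_ge (v : ℂ) (hv : 1 ≤ |v.im|) : Real.exp |v.im| ≤ 4 * ‖Complex.sin v‖ := by
  have hdef : Complex.sin v = (Complex.exp (-v * I) - Complex.exp (v * I)) * I / 2 := rfl
  have h1 : ‖Complex.exp (-v * I)‖ = Real.exp v.im := by
    rw [Complex.norm_exp]; congr 1; simp
  have h2 : ‖Complex.exp (v * I)‖ = Real.exp (-v.im) := by
    rw [Complex.norm_exp]; congr 1; simp
  have key : |Real.exp v.im - Real.exp (-v.im)|
      ≤ ‖Complex.exp (-v * I) - Complex.exp (v * I)‖ := by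
    rw [← h1, ← h2]
    exact abs_norm_sub_norm_le _ _
  have hs : ‖Complex.sin v‖ = ‖Complex.exp (-v * I) - Complex.exp (v * I)‖ / 2 := by
    rw [hdef, norm_div, norm_mul, Complex.norm_I, mul_one]
    norm_num
  -- |e^a - e^{-a}| = e^{|a|} - e^{-|a|}
  have habs : Real.exp |v.im| - Real.exp (-|v.im|) ≤ |Real.exp v.im - Real.exp (-v.im)| := by
    rcases le_or_gt 0 v.im with h | h
    · rw [_root_.abs_of_nonneg h, _root_.abs_of_nonneg (sub_nonneg.mpr (Real.exp_le_exp.mpr (by linarith)))]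
    · rw [_root_.abs_of_neg h, _root_.abs_of_nonpos (sub_nonpos.mpr (Real.exp_le_exp.mpr (by linarith))), neg_neg]
      linarith
  have hexp : Real.exp (-|v.im|) ≤ Real.exp |v.im| / 2 := by
    have h2' : Real.exp (-|v.im|) = Real.exp |v.im| / Real.exp (2 * |v.im|) := by
      rw [eq_div_iff (Real.exp_ne_zero _), ← Real.exp_add]
      congr 1; ring
    rw [h2']
    have hge : (2:ℝ) ≤ Real.exp (2 * |v.im|) := by
      have := Real.add_one_le_exp (2 * |v.im|)
      linarith
    exact div_le_div_of_nonneg_left (Real.exp_pos _).le (by linarith) hge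
  have hfin : Real.exp |v.im| - Real.exp (-|v.im|) ≤ 2 * ‖Complex.sin v‖ := by
    rw [hs]; linarith [habs.trans key]
  linarith


lemma pi_mul_im (z : ℂ) : ((Real.pi : ℂ) * z).im = Real.pi * z.im := by
  simp [Complex.mul_im]

/-- Reflection formula in product norm form. -/
lemma gamma_reflect (z : ℂ) (him : 1 ≤ |z.im|) :
    ‖Complex.Gamma z‖ * ‖Complex.Gamma (1 - z)‖ * ‖Complex.sin ((Real.pi : ℂ) * z)‖
      = Real.pi := by
  have himπ : 1 ≤ |((Real.pi : ℂ) * z).im| := by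
    rw [pi_mul_im, abs_mul, abs_of_pos Real.pi_pos]
    nlinarith [Real.pi_gt_three]
  have hsin_pos : 0 < ‖Complex.sin ((Real.pi : ℂ) * z)‖ := by
    have h := norm_sin_ge _ himπ
    nlinarith [Real.exp_pos |((Real.pi : ℂ) * z).im|]
  have hsin_ne : Complex.sin ((Real.pi : ℂ) * z) ≠ 0 := by
    intro h; rw [h] at hsin_pos; simp at hsin_pos
  have hrefl := Complex.Gamma_mul_Gamma_one_sub z
  have hprod : Complex.Gamma z * Complex.Gamma (1 - z) * Complex.sin ((Real.pi : ℂ) * z)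
      = (Real.pi : ℂ) := by
    rw [hrefl, div_mul_cancel₀ _ hsin_ne]
  have := congrArg norm hprod
  rw [norm_mul, norm_mul] at this
  rw [this, Complex.norm_real, Real.norm_eq_abs, abs_of_pos Real.pi_pos]

/-- Lower bound for `‖Γ(1/2 + iτ)‖²`. -/
lemma gamma_half_line (τ : ℝ) (hτ : 1 ≤ |τ|) :
    Real.pi * Real.exp (-(Real.pi * |τ|)) ≤ ‖Complex.Gamma (1/2 + τ * I)‖ ^ 2 := by
  set s₀ : ℂ := 1/2 + τ * I with hs₀
  have him : s₀.im = τ := by simp [hs₀]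
  have hconj : 1 - s₀ = starRingEnd ℂ s₀ := by
    apply Complex.ext <;> simp [hs₀] <;> norm_num
  have hnorm : ‖Complex.Gamma (1 - s₀)‖ = ‖Complex.Gamma s₀‖ := by
    rw [hconj, Complex.Gamma_conj, Complex.norm_conj]
  have hrefl := gamma_reflect s₀ (by rw [him]; exact hτ)
  rw [hnorm] at hrefl
  have hsinle : ‖Complex.sin ((Real.pi : ℂ) * s₀)‖ ≤ Real.exp (Real.pi * |τ|) := by
    have := norm_sin_le ((Real.pi : ℂ) * s₀)
    rwa [pi_mul_im, him, abs_mul, abs_of_pos Real.pi_pos] at this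
  have hexp : Real.exp (-(Real.pi * |τ|)) * Real.exp (Real.pi * |τ|) = 1 := by
    rw [← Real.exp_add]; simp
  have h1 : Real.pi ≤ ‖Complex.Gamma s₀‖ ^ 2 * Real.exp (Real.pi * |τ|) := by
    nlinarith [norm_nonneg (Complex.Gamma s₀)]
  calc Real.pi * Real.exp (-(Real.pi * |τ|))
      ≤ (‖Complex.Gamma s₀‖ ^ 2 * Real.exp (Real.pi * |τ|)) * Real.exp (-(Real.pi * |τ|)) :=
        mul_le_mul_of_nonneg_right h1 (Real.exp_pos _).le
    _ = ‖Complex.Gamma s₀‖ ^ 2 := by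
        rw [mul_assoc, mul_comm (Real.exp (Real.pi * |τ|)), hexp, mul_one]

/-- For real numbers `A ≤ B`, `t ∈ ℝ`, `c ≥ 0`, there are `C > 0`, `N ∈ ℕ`, `T > 0` such
that for all `s` in the vertical strip `A ≤ Re s ≤ B` with `|Im s| ≥ T` one has
`|Γ((1 − s − it + c)/2)| ≤ C (1 + |s|)^N |Γ((s + it + c)/2)|`: the quotient of Gamma
factors is bounded by a polynomial in `s` on vertical strips, for `Im s` large. -/
theorem gamma_quotient_poly_bound (A B : ℝ) (hAB : A ≤ B) (t : ℝ) (c : ℝ) (hc : 0 ≤ c) :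
    ∃ C : ℝ, 0 < C ∧ ∃ N : ℕ, ∃ T : ℝ, 0 < T ∧
      ∀ s : ℂ, A ≤ s.re → s.re ≤ B → T ≤ |s.im| →
        ‖Complex.Gamma ((1 - s - t * Complex.I + c) / 2)‖ ≤
          C * (1 + ‖s‖) ^ N * ‖Complex.Gamma ((s + t * Complex.I + c) / 2)‖ := by
  -- Constants
  obtain ⟨a, ha⟩ : ∃ x : ℝ, x = c + 1/2 := ⟨_, rfl⟩
  obtain ⟨α, hα⟩ : ∃ x : ℝ, x = (A + c)/2 := ⟨_, rfl⟩
  obtain ⟨β, hβ⟩ : ∃ x : ℝ, x = (B + c)/2 := ⟨_, rfl⟩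
  obtain ⟨k₁, hk₁⟩ : ∃ x : ℕ, x = ⌈β - a + 1⌉₊ := ⟨_, rfl⟩
  obtain ⟨w', hw'⟩ : ∃ x : ℝ, x = (⌊a⌋ : ℝ) + 1 - a := ⟨_, rfl⟩
  have hw'0 : 0 < w' := by
    have := Int.lt_floor_add_one a; rw [hw']; linarith
  have hfloor_nonneg : (0:ℤ) ≤ ⌊a⌋ := Int.floor_nonneg.mpr (by rw [ha]; linarith)
  obtain ⟨F, hF⟩ : ∃ x : ℕ, x = ⌊a⌋.toNat := ⟨_, rfl⟩
  have hFcast : (F : ℝ) = (⌊a⌋ : ℝ) := by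
    rw [hF]; exact_mod_cast congrArg Int.cast (Int.toNat_of_nonneg hfloor_nonneg)
  obtain ⟨M, hM⟩ : ∃ x : ℕ, x = k₁ + F + 1 := ⟨_, rfl⟩
  have hMkey : a + k₁ + w' = M := by
    rw [hw', hM]; push_cast; rw [hFcast]; ring
  obtain ⟨K, hK⟩ : ∃ x : ℕ, x = k₁ + F := ⟨_, rfl⟩
  have hMK : M = K + 1 := by rw [hM, hK]
  obtain ⟨k₂, hk₂⟩ : ∃ x : ℕ, x = ⌈3/2 - α⌉₊ := ⟨_, rfl⟩
  have hk₂ge : (3/2 : ℝ) ≤ α + k₂ := by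
    have := Nat.le_ceil (3/2 - α); rw [hk₂]; linarith [this]
  obtain ⟨P, hP⟩ : ∃ x : ℝ, x = 1 + |t| + c + K + k₂ := ⟨_, rfl⟩
  have hP1 : (1:ℝ) ≤ P := by
    have h1 := abs_nonneg t
    have h2 : (0:ℝ) ≤ (K:ℝ) := Nat.cast_nonneg K
    have h3 : (0:ℝ) ≤ (k₂:ℝ) := Nat.cast_nonneg k₂
    rw [hP]; linarith
  obtain ⟨N, hN⟩ : ∃ x : ℕ, x = K + 2 * k₂ := ⟨_, rfl⟩
  have hΓw' : 0 < Real.Gamma w' := Real.Gamma_pos_of_pos hw'0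
  obtain ⟨C₂, hC₂⟩ : ∃ x : ℝ, x = Bn 1 w' / Real.Gamma w' := ⟨_, rfl⟩
  have hC₂pos : 0 < C₂ := by rw [hC₂]; exact div_pos (Bn_pos one_pos hw'0) hΓw'
  have hBn5 : 0 < Bn (1/2) 1 := Bn_pos (by norm_num) one_pos
  obtain ⟨C, hC⟩ : ∃ x : ℝ, x = C₂ * (16 * Bn (1/2) 1 ^ 2) * P ^ N := ⟨_, rfl⟩
  have hCpos : 0 < C := by
    rw [hC]
    have h16 : (0:ℝ) < 16 * Bn (1/2) 1 ^ 2 := by nlinarith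
    exact mul_pos (mul_pos hC₂pos h16) (pow_pos (lt_of_lt_of_le one_pos hP1) N)
  refine ⟨C, hCpos, N, 2 + 2*|t|, by positivity, fun s hA' hB' hT => ?_⟩
  obtain ⟨z, hz⟩ : ∃ x : ℂ, x = (s + t*I + c)/2 := ⟨_, rfl⟩
  have hzre : z.re = (s.re + c)/2 := by
    rw [hz]; simp [Complex.div_re]
  have hzim : z.im = (s.im + t)/2 := by
    rw [hz]; simp [Complex.div_im]
  have hzrele : z.re ≤ β := by rw [hzre, hβ]; linarith
  have hzrege : α ≤ z.re := by rw [hzre, hα]; linarith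
  have hτ1 : 1 ≤ |z.im| := by
    have h1 : |s.im| ≤ |s.im + t| + |t| := by
      calc |s.im| = |(s.im + t) + (-t)| := by ring_nf
        _ ≤ |s.im + t| + |(-t)| := abs_add_le _ _
        _ = |s.im + t| + |t| := by rw [abs_neg]
    have h0 := abs_nonneg t
    have h2 : (2:ℝ) ≤ |s.im + t| := by linarith
    rw [hzim, abs_div, _root_.abs_two]
    linarith
  have hτne : z.im ≠ 0 := by
    intro h; rw [h] at hτ1; norm_num at hτ1
  -- numerator argument
  have h_num : (1 - s - t*I + c)/2 = (a:ℂ) - z := by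
    rw [hz, ha]; push_cast; ring
  -- Step 1: integer shift up
  obtain ⟨u₀, hu₀⟩ : ∃ x : ℂ, x = (a:ℂ) - z := ⟨_, rfl⟩
  have hu₀im : u₀.im = -z.im := by rw [hu₀]; simp
  have step1 : ‖Complex.Gamma u₀‖ ≤ ‖Complex.Gamma (u₀ + k₁)‖ :=
    gamma_nat_up u₀ (by rw [hu₀im, abs_neg]; exact hτ1) k₁
  -- Step 2: fractional shift
  have hu₁re : (1:ℝ) ≤ (u₀ + k₁).re := by
    have hceil : β - a + 1 ≤ (k₁:ℝ) := by rw [hk₁]; exact_mod_cast Nat.le_ceil _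
    have : (u₀ + (k₁:ℂ)).re = a - z.re + k₁ := by rw [hu₀]; simp
    rw [this]; linarith
  have step2 : ‖Complex.Gamma (u₀ + k₁)‖ * Real.Gamma w'
      ≤ Bn 1 w' * ‖Complex.Gamma (u₀ + k₁ + w')‖ :=
    gamma_shift one_pos hw'0 hu₁re le_rfl
  -- Step 3: identify with (1-z) + K
  have step3 : u₀ + k₁ + (w' : ℂ) = (1 - z) + K := by
    have hcast : ((a:ℝ):ℂ) + (k₁:ℂ) + (w':ℂ) = (M:ℂ) := by exact_mod_cast hMkey
    push_cast [hMK] at hcast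
    rw [hu₀]
    linear_combination hcast
  have step4 : ‖Complex.Gamma ((1 - z) + K)‖
      ≤ (‖1 - z‖ + K) ^ K * ‖Complex.Gamma (1 - z)‖ :=
    gamma_nat_down (1 - z) (by simpa using hτne) K
  -- reflection
  have hrefl := gamma_reflect z hτ1
  -- lower bound pieces
  obtain ⟨w, hwdef⟩ : ∃ x : ℝ, x = z.re + k₂ - 1/2 := ⟨_, rfl⟩
  have hw1 : 1 ≤ w := by rw [hwdef]; linarith
  have h_half_eq : (1/2 + z.im * I : ℂ) + (w:ℝ) = z + k₂ := by
    apply Complex.ext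
    · simp [hwdef]
    · simp
  have step5 : ‖Complex.Gamma (1/2 + z.im * I)‖ * Real.Gamma w
      ≤ Bn (1/2) 1 * ‖Complex.Gamma (z + k₂)‖ := by
    have := gamma_shift (u := 1/2 + z.im * I) (w := w) (x₀ := 1/2) (w₁ := 1)
      (by norm_num) one_pos (by simp) hw1
    rwa [h_half_eq] at this
  have step6 : ‖Complex.Gamma (z + k₂)‖ ≤ (‖z‖ + k₂) ^ k₂ * ‖Complex.Gamma z‖ :=
    gamma_nat_down z hτne k₂
  have hg₀sq : Real.pi * Real.exp (-(Real.pi * |z.im|))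
      ≤ ‖Complex.Gamma (1/2 + z.im * I)‖ ^ 2 := gamma_half_line z.im hτ1
  have hsin : Real.exp (Real.pi * |z.im|) ≤ 4 * ‖Complex.sin ((Real.pi:ℂ) * z)‖ := by
    have h := norm_sin_ge ((Real.pi:ℂ) * z) (by
      rw [pi_mul_im, abs_mul, abs_of_pos Real.pi_pos]
      nlinarith [Real.pi_gt_three])
    rwa [pi_mul_im, abs_mul, abs_of_pos Real.pi_pos] at h
  -- positivity of factors from hrefl
  have hΓz_pos : 0 < ‖Complex.Gamma z‖ := by
    rcases (norm_nonneg (Complex.Gamma z)).lt_or_eq with h | h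
    · exact h
    · exfalso; rw [← h] at hrefl; simp at hrefl; nlinarith [Real.pi_pos, hrefl]
  have hsin_pos : 0 < ‖Complex.sin ((Real.pi:ℂ) * z)‖ := by
    nlinarith [Real.exp_pos (Real.pi * |z.im|)]
  -- Step 7: ‖Γ(1-z)‖ ≤ 16 Bn² (‖z‖+k₂)^(2k₂) ‖Γ z‖
  have hzk_pos : (0:ℝ) < ‖z‖ + k₂ := by
    have : |z.im| ≤ ‖z‖ := Complex.abs_im_le_norm z
    have : (0:ℝ) < ‖z‖ := by linarith
    positivity
  have step7 : ‖Complex.Gamma (1 - z)‖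
      ≤ 16 * Bn (1/2) 1 ^ 2 * (‖z‖ + k₂) ^ (2 * k₂) * ‖Complex.Gamma z‖ := by
    obtain ⟨G, hG⟩ : ∃ x : ℝ, x = ‖Complex.Gamma z‖ := ⟨_, rfl⟩
    obtain ⟨S, hS⟩ : ∃ x : ℝ, x = ‖Complex.sin ((Real.pi:ℂ) * z)‖ := ⟨_, rfl⟩
    obtain ⟨g₀, hg₀⟩ : ∃ x : ℝ, x = ‖Complex.Gamma (1/2 + z.im * I)‖ := ⟨_, rfl⟩
    obtain ⟨Q, hQ⟩ : ∃ x : ℝ, x = (‖z‖ + k₂) ^ k₂ := ⟨_, rfl⟩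
    rw [← hG, ← hS] at hrefl
    rw [← hg₀] at hg₀sq step5
    rw [← hQ, ← hG] at step6
    rw [← hS] at hsin
    rw [← hG] at hΓz_pos
    rw [← hS] at hsin_pos
    have hQpos : 0 < Q := by rw [hQ]; positivity
    have hg₀nn : 0 ≤ g₀ := by rw [hg₀]; exact norm_nonneg _
    have hg₀le : g₀ ≤ 2 * Bn (1/2) 1 * Q * G := by
      have hΓw : (1/2:ℝ) ≤ Real.Gamma w := real_gamma_ge_half hw1
      have h1 : g₀ * (1/2) ≤ g₀ * Real.Gamma w :=
        mul_le_mul_of_nonneg_left hΓw hg₀nn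
      have h2 : g₀ * Real.Gamma w ≤ Bn (1/2) 1 * (Q * G) := by
        calc g₀ * Real.Gamma w ≤ Bn (1/2) 1 * ‖Complex.Gamma (z + k₂)‖ := step5
          _ ≤ Bn (1/2) 1 * (Q * G) := mul_le_mul_of_nonneg_left step6 hBn5.le
      linarith only [h1, h2]
    have hg₀sq' : Real.pi * Real.exp (-(Real.pi * |z.im|))
        ≤ (2 * Bn (1/2) 1 * Q * G) ^ 2 := by
      calc Real.pi * Real.exp (-(Real.pi * |z.im|)) ≤ g₀ ^ 2 := hg₀sq
        _ ≤ (2 * Bn (1/2) 1 * Q * G) ^ 2 := pow_le_pow_left₀ hg₀nn hg₀le 2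
    -- target: ‖Γ(1-z)‖ ≤ 4 * (2 Bn Q)² G  = 16 Bn² Q² G
    have hGS : ‖Complex.Gamma (1 - z)‖ * (G * S) = Real.pi := by
      rw [← hrefl]; ring
    have hQ2 : Q ^ 2 = (‖z‖ + k₂) ^ (2 * k₂) := by
      rw [hQ, ← pow_mul, mul_comm]
    rw [← hG, ← hQ2]
    -- multiply target by (G*S) > 0
    have hGSpos : 0 < G * S := mul_pos hΓz_pos hsin_pos
    rw [← mul_le_mul_iff_of_pos_right hGSpos, hGS]
    -- now: π ≤ 16 Bn² Q² G * (G * S)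
    have hexp1 : Real.exp (-(Real.pi * |z.im|)) * Real.exp (Real.pi * |z.im|) = 1 := by
      rw [← Real.exp_add]; simp
    have hS4 : Real.exp (Real.pi * |z.im|) / 4 ≤ S := by linarith
    have key : Real.pi * (Real.exp (-(Real.pi * |z.im|)) * Real.exp (Real.pi * |z.im|))
        ≤ (2 * Bn (1/2) 1 * Q * G) ^ 2 * Real.exp (Real.pi * |z.im|) := by
      rw [← mul_assoc]
      exact mul_le_mul_of_nonneg_right hg₀sq' (Real.exp_pos _).le
    rw [hexp1, mul_one] at key
    have hfin : (2 * Bn (1/2) 1 * Q * G) ^ 2 * Real.exp (Real.pi * |z.im|)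
        ≤ 16 * Bn (1/2) 1 ^ 2 * Q ^ 2 * G * (G * S) := by
      have : (2 * Bn (1/2) 1 * Q * G) ^ 2 * Real.exp (Real.pi * |z.im|)
          = (4 * Bn (1/2) 1 ^ 2 * Q ^ 2 * G ^ 2) * Real.exp (Real.pi * |z.im|) := by ring
      rw [this]
      have hGnn : 0 ≤ G := by rw [hG]; exact norm_nonneg _
      have hX : (0:ℝ) ≤ 4 * Bn (1/2) 1 ^ 2 * Q ^ 2 * G ^ 2 := by positivity
      calc (4 * Bn (1/2) 1 ^ 2 * Q ^ 2 * G ^ 2) * Real.exp (Real.pi * |z.im|)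
          ≤ (4 * Bn (1/2) 1 ^ 2 * Q ^ 2 * G ^ 2) * (4 * S) :=
            mul_le_mul_of_nonneg_left hsin hX
        _ = 16 * Bn (1/2) 1 ^ 2 * Q ^ 2 * G * (G * S) := by ring
    linarith
    -- Step 2': divide by Real.Gamma w'
  have step2' : ‖Complex.Gamma (u₀ + k₁)‖ ≤ C₂ * ‖Complex.Gamma (u₀ + k₁ + w')‖ := by
    rw [hC₂, div_mul_eq_mul_div, le_div_iff₀ hΓw']
    exact step2
  -- polynomial bounds
  have hz_le : ‖z‖ ≤ ‖s‖ + |t| + c := by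
    rw [hz]
    calc ‖(s + t*I + c)/2‖ = ‖s + t*I + c‖ / 2 := by
          rw [norm_div]; norm_num
      _ ≤ (‖s‖ + |t| + c) / 2 := by
          have h1 : ‖s + t*I + c‖ ≤ ‖s‖ + ‖(t:ℂ)*I‖ + ‖(c:ℂ)‖ :=
            (norm_add_le _ _).trans (by gcongr; exact norm_add_le _ _)
          have h2 : ‖(t:ℂ)*I‖ = |t| := by
            rw [norm_mul, Complex.norm_real, Complex.norm_I, mul_one,
              Real.norm_eq_abs]
          have h3 : ‖(c:ℂ)‖ = c := by
            rw [Complex.norm_real, Real.norm_eq_abs, _root_.abs_of_nonneg hc]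
          rw [h2, h3] at h1
          linarith
      _ ≤ ‖s‖ + |t| + c := by
          have := norm_nonneg s; have := abs_nonneg t; linarith
  have h1z : ‖1 - z‖ ≤ 1 + ‖z‖ := by
    calc ‖1 - z‖ ≤ ‖(1:ℂ)‖ + ‖z‖ := norm_sub_le _ _
      _ = 1 + ‖z‖ := by rw [norm_one]
  have hb1 : ‖1 - z‖ + K ≤ P * (1 + ‖s‖) := by
    have hs' : ‖s‖ ≤ P * ‖s‖ :=
      le_mul_of_one_le_left (norm_nonneg s) hP1
    have hk₂0 : (0:ℝ) ≤ (k₂:ℝ) := Nat.cast_nonneg _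
    have hsplit : P * (1 + ‖s‖) = P + P * ‖s‖ := by ring
    rw [hsplit]
    linarith [hP, h1z, hz_le, norm_nonneg s]
  have hb2 : ‖z‖ + k₂ ≤ P * (1 + ‖s‖) := by
    have hs' : ‖s‖ ≤ P * ‖s‖ :=
      le_mul_of_one_le_left (norm_nonneg s) hP1
    have hK0 : (0:ℝ) ≤ (K:ℝ) := Nat.cast_nonneg _
    have hsplit : P * (1 + ‖s‖) = P + P * ‖s‖ := by ring
    rw [hsplit]
    linarith [hP, hz_le, norm_nonneg s]
  have hR1nn : (0:ℝ) ≤ ‖1 - z‖ + K := by positivity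
  have hR2nn : (0:ℝ) ≤ ‖z‖ + k₂ := by positivity
  have hpoly : (‖1 - z‖ + K) ^ K * (‖z‖ + k₂) ^ (2 * k₂)
      ≤ P ^ N * (1 + ‖s‖) ^ N := by
    have e1 : (‖1 - z‖ + K) ^ K ≤ (P * (1 + ‖s‖)) ^ K :=
      pow_le_pow_left₀ hR1nn hb1 K
    have e2 : (‖z‖ + k₂) ^ (2 * k₂) ≤ (P * (1 + ‖s‖)) ^ (2 * k₂) :=
      pow_le_pow_left₀ hR2nn hb2 (2 * k₂)
    calc (‖1 - z‖ + K) ^ K * (‖z‖ + k₂) ^ (2 * k₂)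
        ≤ (P * (1 + ‖s‖)) ^ K * (P * (1 + ‖s‖)) ^ (2 * k₂) :=
          mul_le_mul e1 e2 (by positivity) (by positivity)
      _ = (P * (1 + ‖s‖)) ^ N := by rw [← pow_add, hN]
      _ = P ^ N * (1 + ‖s‖) ^ N := mul_pow _ _ _
  -- final assembly
  rw [h_num, ← hu₀, ← hz]
  calc ‖Complex.Gamma u₀‖
      ≤ ‖Complex.Gamma (u₀ + k₁)‖ := step1
    _ ≤ C₂ * ‖Complex.Gamma (u₀ + k₁ + w')‖ := step2'
    _ = C₂ * ‖Complex.Gamma ((1 - z) + K)‖ := by rw [step3]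
    _ ≤ C₂ * ((‖1 - z‖ + K) ^ K * ‖Complex.Gamma (1 - z)‖) :=
        mul_le_mul_of_nonneg_left step4 hC₂pos.le
    _ ≤ C₂ * ((‖1 - z‖ + K) ^ K *
          (16 * Bn (1/2) 1 ^ 2 * (‖z‖ + k₂) ^ (2 * k₂) * ‖Complex.Gamma z‖)) := by
        refine mul_le_mul_of_nonneg_left (mul_le_mul_of_nonneg_left step7 ?_) hC₂pos.le
        positivity
    _ = (C₂ * (16 * Bn (1/2) 1 ^ 2)) *
          ((‖1 - z‖ + K) ^ K * (‖z‖ + k₂) ^ (2 * k₂)) * ‖Complex.Gamma z‖ := by ring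
    _ ≤ (C₂ * (16 * Bn (1/2) 1 ^ 2)) * (P ^ N * (1 + ‖s‖) ^ N) * ‖Complex.Gamma z‖ := by
        refine mul_le_mul_of_nonneg_right (mul_le_mul_of_nonneg_left hpoly ?_) (norm_nonneg _)
        positivity
    _ = C * (1 + ‖s‖) ^ N * ‖Complex.Gamma z‖ := by rw [hC]; ring
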